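/- arXiv:1610.06261 — 2 statements merged into one kernel-verified Lean document; each statement's English description precedes it below -/
import Mathlib

section
/- For SL_2 in characteristic p, if n = Σ_{i=0}^m n_i p^i is the p-adic expansion of n (with 0 ≤ n_i < p), then the product Π_{i=0}^m (Σ_{j=0}^{n_i} e^{(n_i − 2j)p^i}) in Z[Z] has all coefficients equal to 0 or 1, i.e., it is a multiplicity-free character. -/
/-- Uniqueness of base-`p` digits. -/
lemma digit_unique (p : ℕ) (hp : 1 < p) :
    ∀ (m : ℕ) (a b : ℕ → ℕ), (∀ i, a i < p) → (∀ i, b i < p) →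
      (∑ i ∈ Finset.range m, a i * p ^ i) = (∑ i ∈ Finset.range m, b i * p ^ i) →
      ∀ i < m, a i = b i := by
  intro m
  induction m with
  | zero => intro a b _ _ _ i hi; omega
  | succ m ih =>
    intro a b ha hb hsum i hi
    have key : ∀ c : ℕ → ℕ, (∑ i ∈ Finset.range (m + 1), c i * p ^ i)
        = p * (∑ i ∈ Finset.range m, c (i + 1) * p ^ i) + c 0 := by
      intro c
      rw [Finset.sum_range_succ' (fun i => c i * p ^ i), Finset.mul_sum]
      simp only [pow_zero, mul_one, pow_succ]
      congr 1
      exact Finset.sum_congr rfl fun i _ => by ring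
    rw [key a, key b] at hsum
    set X := ∑ i ∈ Finset.range m, a (i + 1) * p ^ i with hX
    set Y := ∑ i ∈ Finset.range m, b (i + 1) * p ^ i with hY
    have ha0 : a 0 < p := ha 0
    have hb0 : b 0 < p := hb 0
    have h0 : a 0 = b 0 := by
      have hmod : (p * X + a 0) % p = (p * Y + b 0) % p := by rw [hsum]
      rwa [Nat.mul_add_mod, Nat.mul_add_mod, Nat.mod_eq_of_lt ha0,
        Nat.mod_eq_of_lt hb0] at hmod
    have hrest : X = Y := by
      rw [h0] at hsum
      have := Nat.add_right_cancel hsum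
      exact Nat.eq_of_mul_eq_mul_left (by omega) this
    rcases i with _ | j
    · exact h0
    · exact ih (fun i => a (i + 1)) (fun i => b (i + 1)) (fun i => ha _) (fun i => hb _)
        hrest j (by omega)

/-!
STATEMENT 1: For SL₂ in characteristic p, if n = Σ_{i=0}^m n_i p^i is the p-adic
expansion of n (0 ≤ n_i < p), then the product Π_{i=0}^m (Σ_{j=0}^{n_i} e^{(n_i−2j)p^i})
in ℤ[ℤ] (the character of the simple module L_n by Steinberg's tensor product theorem)
has all coefficients equal to 0 or 1, i.e. it is multiplicity free.
-/
theorem steinberg_product_multiplicity_free (p m : ℕ) (hp : 1 < p)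
    (n : ℕ → ℕ) (hn : ∀ i, n i < p) (k : ℤ) :
    (∏ i ∈ Finset.range (m + 1), ∑ j ∈ Finset.range (n i + 1),
        AddMonoidAlgebra.single (((n i : ℤ) - 2 * j) * (p : ℤ) ^ i) (1 : ℤ)).coeff k
      ∈ ({0, 1} : Set ℤ) := by
  classical
  set s := Finset.range (m + 1) with hs
  set t : ℕ → Finset ℕ := fun i => Finset.range (n i + 1) with ht
  rw [Finset.prod_sum s t
      (fun i j => AddMonoidAlgebra.single (((n i : ℤ) - 2 * j) * (p : ℤ) ^ i) (1 : ℤ))]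
  -- each product of singles is a single
  have hsingle : ∀ f ∈ s.pi t,
      (∏ x ∈ s.attach,
        AddMonoidAlgebra.single (((n x.1 : ℤ) - 2 * (f x.1 x.2 : ℤ)) * (p : ℤ) ^ x.1) (1 : ℤ))
      = AddMonoidAlgebra.single
          (∑ x ∈ s.attach, ((n x.1 : ℤ) - 2 * (f x.1 x.2 : ℤ)) * (p : ℤ) ^ x.1) (1 : ℤ) := by
    intro f _
    rw [AddMonoidAlgebra.prod_single]
    simp
  rw [Finset.sum_congr rfl hsingle]
  set v : (∀ a ∈ s, ℕ) → ℤ := fun f =>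
    ∑ x ∈ s.attach, ((n x.1 : ℤ) - 2 * (f x.1 x.2 : ℤ)) * (p : ℤ) ^ x.1 with hv
  have heval : (∑ f ∈ s.pi t, AddMonoidAlgebra.single (v f) (1 : ℤ)).coeff k
      = ∑ f ∈ s.pi t, if v f = k then (1 : ℤ) else 0 := by
    rw [AddMonoidAlgebra.coeff_sum, Finsupp.finset_sum_apply]
    exact Finset.sum_congr rfl fun f _ => Finsupp.single_apply
  rw [heval, Finset.sum_boole]
  -- the map v is injective on s.pi t
  have hcard : ((s.pi t).filter (fun f => v f = k)).card ≤ 1 := by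
    apply Finset.card_le_one.mpr
    intro f hf g hg
    simp only [Finset.mem_filter] at hf hg
    obtain ⟨hfmem, hfk⟩ := hf
    obtain ⟨hgmem, hgk⟩ := hg
    have hfmem' := Finset.mem_pi.mp hfmem
    have hgmem' := Finset.mem_pi.mp hgmem
    set A : ℕ → ℕ := fun i => if h : i ∈ s then f i h else 0 with hA
    set B : ℕ → ℕ := fun i => if h : i ∈ s then g i h else 0 with hB
    have hvf : v f = ∑ i ∈ s, ((n i : ℤ) - 2 * (A i : ℤ)) * (p : ℤ) ^ i := by
      rw [hv]
      rw [← Finset.sum_attach s (fun i => ((n i : ℤ) - 2 * (A i : ℤ)) * (p : ℤ) ^ i)]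
      refine Finset.sum_congr rfl fun x _ => ?_
      simp only [hA, dif_pos x.2]
    have hvg : v g = ∑ i ∈ s, ((n i : ℤ) - 2 * (B i : ℤ)) * (p : ℤ) ^ i := by
      rw [hv]
      rw [← Finset.sum_attach s (fun i => ((n i : ℤ) - 2 * (B i : ℤ)) * (p : ℤ) ^ i)]
      refine Finset.sum_congr rfl fun x _ => ?_
      simp only [hB, dif_pos x.2]
    have hveq : (∑ i ∈ s, ((n i : ℤ) - 2 * (A i : ℤ)) * (p : ℤ) ^ i)
        = ∑ i ∈ s, ((n i : ℤ) - 2 * (B i : ℤ)) * (p : ℤ) ^ i := by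
      rw [← hvf, ← hvg, hfk, hgk]
    have hZ : (∑ i ∈ s, (A i : ℤ) * (p : ℤ) ^ i) = ∑ i ∈ s, (B i : ℤ) * (p : ℤ) ^ i := by
      simp only [sub_mul, Finset.sum_sub_distrib, mul_assoc, ← Finset.mul_sum] at hveq
      linarith [hveq]
    have hN : (∑ i ∈ s, A i * p ^ i) = ∑ i ∈ s, B i * p ^ i := by
      exact_mod_cast hZ
    have hAp : ∀ i, A i < p := by
      intro i
      simp only [hA]
      split
      · rename_i h
        have := hfmem' i h
        simp only [ht, Finset.mem_range] at this
        have := hn i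
        omega
      · omega
    have hBp : ∀ i, B i < p := by
      intro i
      simp only [hB]
      split
      · rename_i h
        have := hgmem' i h
        simp only [ht, Finset.mem_range] at this
        have := hn i
        omega
      · omega
    have hdig := digit_unique p hp (m + 1) A B hAp hBp (by simpa [hs] using hN)
    funext a h
    have ha : a < m + 1 := Finset.mem_range.mp h
    have := hdig a ha
    simpa only [hA, hB, dif_pos h] using this
  interval_cases h : ((s.pi t).filter (fun f => v f = k)).card
  · simp
  · simp
end

section
/- Let A = Z[v,v^{-1}] and let H be the Hecke algebra of a Coxeter system (W,S) with bar involution. Suppose {b_x}_{x∈W} are bar-invariant elements with b_x = h_x + Σ_{y<x} p_{y,x} h_y where p_{y,x} ∈ v·Z[v]. Then the family {b_x} is unique: if {b'_x} is another such family then b_x = b'_x for all x. -/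
open LaurentPolynomial

lemma bar0_eq_invert_aux (bar0 : LaurentPolynomial ℤ →+* LaurentPolynomial ℤ)
    (hbar0 : ∀ n : ℤ, bar0 (T n) = T (-n)) (f : LaurentPolynomial ℤ) :
    bar0 f = invert f := by
  have : bar0 = ((invert (R := ℤ) : LaurentPolynomial ℤ ≃ₐ[ℤ] LaurentPolynomial ℤ) :
      LaurentPolynomial ℤ →ₐ[ℤ] LaurentPolynomial ℤ).toRingHom := by
    apply AddMonoidAlgebra.ringHom_ext
    · intro r
      show bar0 (C r) = _
      have h2 : bar0.comp (C : ℤ →+* LaurentPolynomial ℤ) =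
          (((invert (R := ℤ) : LaurentPolynomial ℤ ≃ₐ[ℤ] LaurentPolynomial ℤ) :
            LaurentPolynomial ℤ →ₐ[ℤ] LaurentPolynomial ℤ).toRingHom).comp
            (C : ℤ →+* LaurentPolynomial ℤ) := Subsingleton.elim _ _
      exact RingHom.congr_fun h2 r
    · intro n
      show bar0 (T n) = _
      rw [hbar0]
      simp
  rw [this]
  rfl

lemma key_aux (q : Polynomial ℤ)
    (hq : invert (T 1 * Polynomial.toLaurent q) = T 1 * Polynomial.toLaurent q) :
    q = 0 := by
  have h1 : (T 1 * Polynomial.toLaurent q : LaurentPolynomial ℤ) =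
      Polynomial.toLaurent (Polynomial.X * q) := by
    rw [map_mul, Polynomial.toLaurent_X]
  set f : LaurentPolynomial ℤ := Polynomial.toLaurent (Polynomial.X * q) with hf
  have hq' : invert f = f := by rw [← h1]; exact hq
  -- f vanishes at all n ≤ 0
  have hnonpos : ∀ n : ℤ, n ≤ 0 → f.coeff n = 0 := by
    intro n hn
    by_contra h0
    have hmem : n ∈ f.coeff.support := Finsupp.mem_support_iff.mpr h0
    rw [hf, LaurentPolynomial.support_coeff_toLaurent] at hmem
    obtain ⟨m, hm, hmn⟩ := Finset.mem_map.mp hmem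
    have hmn' : (m : ℤ) = n := hmn
    have hm0 : m = 0 := by omega
    subst hm0
    rw [Polynomial.mem_support_iff] at hm
    simp at hm
  have hall : ∀ n : ℤ, f.coeff n = 0 := by
    intro n
    rcases le_or_gt n 0 with hn | hn
    · exact hnonpos n hn
    · have : f.coeff n = f.coeff (-n) := by
        conv_lhs => rw [← hq']
        exact invert_apply f n ▸ rfl
      rw [this]
      exact hnonpos (-n) (by omega)
  have hf0 : f = 0 := LaurentPolynomial.ext fun n => hall n
  rw [hf, Polynomial.toLaurent_eq_zero] at hf0
  rcases mul_eq_zero.mp hf0 with h | h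
  · exact absurd h Polynomial.X_ne_zero
  · exact h

/-!
STATEMENT 18: Let H be the Hecke algebra of a Coxeter system (W,S) over
A = ℤ[v,v⁻¹] (v = T 1), with standard basis {h_x} and Bruhat order < on W, and with
the bar involution (the additive involution semilinear over v ↦ v⁻¹, sending h_x to
(h_{x⁻¹})⁻¹, hence satisfying bar(h_x) ∈ h_x + span{h_y : y < x}).  Suppose
{b_x}_{x∈W} are bar-invariant elements with b_x = h_x + Σ_{y<x} p_{y,x} h_y and
p_{y,x} ∈ v·ℤ[v].  Then the family {b_x} is unique: any other such family {b'_x}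
satisfies b_x = b'_x for all x.
-/
theorem kazhdan_lusztig_basis_unique {B W H : Type*} (M : CoxeterMatrix B) [Group W]
    [PartialOrder W] (cs : CoxeterSystem M W)
    [Ring H] [Algebra (LaurentPolynomial ℤ) H]
    (h : Module.Basis W (LaurentPolynomial ℤ) H)
    (bar0 : LaurentPolynomial ℤ →+* LaurentPolynomial ℤ)
    (hbar0 : ∀ n : ℤ, bar0 (T n) = T (-n))
    (bar : H →+ H)
    (hsemi : ∀ (a : LaurentPolynomial ℤ) (m : H), bar (a • m) = bar0 a • bar m)
    (hbarstd : ∀ x : W,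
      bar (h x) - h x ∈ Submodule.span (LaurentPolynomial ℤ) (h '' {y | y < x}))
    (b b' : W → H)
    (hb : ∀ x, bar (b x) = b x) (hb' : ∀ x, bar (b' x) = b' x)
    (hcoef : ∀ x, h.repr (b x) x = 1 ∧ ∀ y, y ≠ x → h.repr (b x) y ≠ 0 →
      y < x ∧ ∃ q : Polynomial ℤ, h.repr (b x) y = T 1 * Polynomial.toLaurent q)
    (hcoef' : ∀ x, h.repr (b' x) x = 1 ∧ ∀ y, y ≠ x → h.repr (b' x) y ≠ 0 →
      y < x ∧ ∃ q : Polynomial ℤ, h.repr (b' x) y = T 1 * Polynomial.toLaurent q) :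
    ∀ x, b x = b' x := by
  classical
  intro x
  by_contra hne
  set d := b x - b' x with hd_def
  have hd0 : d ≠ 0 := sub_ne_zero.mpr hne
  set c : W →₀ LaurentPolynomial ℤ := h.repr d with hc_def
  have hc0 : c ≠ 0 := by
    intro hh
    exact hd0 ((LinearEquiv.map_eq_zero_iff h.repr).mp (hc_def ▸ hh))
  have hsupp : c.support.Nonempty := Finsupp.support_nonempty_iff.mpr hc0
  obtain ⟨y, hy, hymax⟩ := c.support.exists_maximal hsupp
  have hcy : c y ≠ 0 := Finsupp.mem_support_iff.mp hy
  have hyx : y ≠ x := by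
    intro hyx
    subst hyx
    apply hcy
    simp [hc_def, hd_def, map_sub, (hcoef y).1, (hcoef' y).1]
  -- c y = T 1 * toLaurent q for some q
  obtain ⟨q, hq⟩ : ∃ q : Polynomial ℤ, c y = T 1 * Polynomial.toLaurent q := by
    obtain ⟨q1, hq1⟩ : ∃ q, h.repr (b x) y = T 1 * Polynomial.toLaurent q := by
      by_cases h0 : h.repr (b x) y = 0
      · exact ⟨0, by simp [h0]⟩
      · exact ((hcoef x).2 y hyx h0).2
    obtain ⟨q2, hq2⟩ : ∃ q, h.repr (b' x) y = T 1 * Polynomial.toLaurent q := by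
      by_cases h0 : h.repr (b' x) y = 0
      · exact ⟨0, by simp [h0]⟩
      · exact ((hcoef' x).2 y hyx h0).2
    refine ⟨q1 - q2, ?_⟩
    have : c y = h.repr (b x) y - h.repr (b' x) y := by
      simp [hc_def, hd_def, map_sub]
    rw [this, hq1, hq2, map_sub, mul_sub]
  -- bar d = d
  have hbard : bar d = d := by
    rw [hd_def, map_sub, hb, hb']
  -- compute h.repr (bar d) y = bar0 (c y)
  have hdsum : d = c.sum fun z a => a • h z := by
    conv_lhs => rw [← h.linearCombination_repr d]
    rw [Finsupp.linearCombination_apply]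
  have hbarsum : bar d = c.sum fun z a => bar0 a • bar (h z) := by
    conv_lhs => rw [hdsum]
    rw [map_finsuppSum]
    exact Finsupp.sum_congr fun z _ => hsemi _ _
  have hreprbar : h.repr (bar d) y = c.sum fun z a => bar0 a * (h.repr (bar (h z)) y) := by
    rw [hbarsum, map_finsuppSum, Finsupp.sum_apply]
    refine Finsupp.sum_congr fun z _ => ?_
    rw [map_smul]
    rfl
  -- evaluate the inner terms
  have hterm : ∀ z ∈ c.support, h.repr (bar (h z)) y = if z = y then 1 else 0 := by
    intro z hz
    have hr : h.repr (bar (h z) - h z) y = 0 := by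
      have hmem := (h.mem_span_image).mp (hbarstd z)
      have hyns : y ∉ {w | w < z} := by
        by_cases hzy : z = y
        · subst hzy; exact lt_irrefl z
        · exact fun hlt => lt_irrefl y (lt_of_lt_of_le hlt (hymax hz hlt.le))
      by_contra h0
      exact hyns (hmem (Finsupp.mem_support_iff.mpr h0))
    have h2 : h.repr (bar (h z)) y = h.repr (bar (h z) - h z) y + h.repr (h z) y := by
      rw [map_sub, Finsupp.sub_apply]; ring
    rw [h2, hr, zero_add, h.repr_self, Finsupp.single_apply]
  -- sum collapses to the y-term
  have hfinal : h.repr (bar d) y = bar0 (c y) := by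
    rw [hreprbar, Finsupp.sum]
    rw [Finset.sum_eq_single y]
    · rw [hterm y hy, if_pos rfl, mul_one]
    · intro z hz hzy
      rw [hterm z hz, if_neg hzy, mul_zero]
    · intro hy'
      exact absurd hy hy'
  have hinv : bar0 (c y) = c y := by
    rw [← hfinal, hbard]
  rw [bar0_eq_invert_aux bar0 hbar0, hq] at hinv
  have hq0 : q = 0 := key_aux q hinv
  apply hcy
  rw [hq, hq0]
  simp
end
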